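/- Let g ≥ 2 and let a, b be integers. Let Y be the g × g integer matrix whose upper-left 2 × 2 block is [[a, b], [b, −a]] and all of whose other entries are 0, and let A be the 2g × 2g block matrix [[I_g + Y², Y], [Y, I_g]]. Then the characteristic polynomial of A equals (X − 1)^{2g−4} · (X² − (a² + b² + 2)X + 1)². -/

import Mathlib

open Matrix Polynomial

lemma aux_map_stdBasisMatrix {n : Type*} [DecidableEq n] {R S : Type*} [Semiring R] [Semiring S]
    (f : R →+* S) (i j : n) (c : R) :
    (Matrix.single i j c).map f = Matrix.single i j (f c) := by
  ext i' j'
  simp [Matrix.single, Matrix.map_apply, apply_ite f]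

lemma aux_det_fromBlocks_smul_one {n : Type*} [DecidableEq n] [Fintype n]
    {R : Type*} [CommRing R] [IsDomain R]
    (P Q Rm : Matrix n n R) (c : R) (hc : c ≠ 0) :
    (Matrix.fromBlocks P Q Rm (c • (1 : Matrix n n R))).det = (c • P - Q * Rm).det := by
  have hmul : Matrix.fromBlocks P Q Rm (c • (1 : Matrix n n R)) *
      Matrix.fromBlocks (c • (1 : Matrix n n R)) 0 (-Rm) 1 =
      Matrix.fromBlocks (c • P - Q * Rm) Q 0 (c • (1 : Matrix n n R)) := by
    rw [Matrix.fromBlocks_multiply]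
    simp [Matrix.mul_smul, Matrix.smul_mul, sub_eq_add_neg]
  have hdet := congrArg Matrix.det hmul
  rw [Matrix.det_mul, Matrix.det_fromBlocks_zero₁₂, Matrix.det_fromBlocks_zero₂₁] at hdet
  simp only [Matrix.det_smul, Matrix.det_one, mul_one] at hdet
  exact mul_right_cancel₀ (pow_ne_zero _ hc) hdet

/-- For `g ≥ 2` and integers `a, b`, let `Y` be the `g × g` integer matrix whose
upper-left `2 × 2` block is `[[a, b], [b, −a]]` and all other entries `0`, and let
`A = [[I + Y², Y], [Y, I]]`. Then the characteristic polynomial of `A` is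
`(X − 1)^{2g−4} · (X² − (a² + b² + 2)X + 1)²`. -/
theorem charpoly_blockMatrix_eq (g : ℕ) (hg : 2 ≤ g) (a b : ℤ) :
    (Matrix.fromBlocks
        (1 + (Matrix.of fun i j : Fin g =>
          if i.val = 0 ∧ j.val = 0 then a
          else if (i.val = 0 ∧ j.val = 1) ∨ (i.val = 1 ∧ j.val = 0) then b
          else if i.val = 1 ∧ j.val = 1 then -a else 0) ^ 2)
        (Matrix.of fun i j : Fin g =>
          if i.val = 0 ∧ j.val = 0 then a
          else if (i.val = 0 ∧ j.val = 1) ∨ (i.val = 1 ∧ j.val = 0) then b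
          else if i.val = 1 ∧ j.val = 1 then -a else 0)
        (Matrix.of fun i j : Fin g =>
          if i.val = 0 ∧ j.val = 0 then a
          else if (i.val = 0 ∧ j.val = 1) ∨ (i.val = 1 ∧ j.val = 0) then b
          else if i.val = 1 ∧ j.val = 1 then -a else 0)
        1).charpoly =
      (X - 1) ^ (2 * g - 4) * (X ^ 2 - C (a ^ 2 + b ^ 2 + 2) * X + 1) ^ 2 := by
  set Y : Matrix (Fin g) (Fin g) ℤ := Matrix.of fun i j : Fin g =>
          if i.val = 0 ∧ j.val = 0 then a
          else if (i.val = 0 ∧ j.val = 1) ∨ (i.val = 1 ∧ j.val = 0) then b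
          else if i.val = 1 ∧ j.val = 1 then -a else 0 with hYdef
  have h0 : (0:ℕ) < g := by omega
  have h1 : (1:ℕ) < g := by omega
  set i0 : Fin g := ⟨0, h0⟩ with hi0
  set i1 : Fin g := ⟨1, h1⟩ with hi1
  have hne01 : i0 ≠ i1 := by simp [hi0, hi1, Fin.ext_iff]
  have hYeq : Y = Matrix.single i0 i0 a + Matrix.single i0 i1 b +
      Matrix.single i1 i0 b + Matrix.single i1 i1 (-a) := by
    ext i j
    simp only [hYdef, Matrix.of_apply, Matrix.add_apply, Matrix.single, hi0, hi1,
      Fin.ext_iff]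
    split_ifs <;> omega
  have hY2 : Y ^ 2 = Matrix.single i0 i0 (a^2+b^2) +
      Matrix.single i1 i1 (a^2+b^2) := by
    rw [pow_two, hYeq]
    simp only [add_mul, mul_add, Matrix.single_mul_single_same,
      Matrix.single_mul_single_of_ne _ _ _ _ hne01, Matrix.single_mul_single_of_ne _ _ _ _ hne01.symm,
      add_zero, zero_add]
    ext i j
    simp only [Matrix.add_apply, Matrix.single, Matrix.of_apply, hi0, hi1, Fin.ext_iff]
    split_ifs <;> first | ring | omega
  -- main computation
  rw [Matrix.charpoly, Matrix.charmatrix_fromBlocks]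
  have hS : charmatrix (1 : Matrix (Fin g) (Fin g) ℤ) =
      (X - 1 : ℤ[X]) • (1 : Matrix (Fin g) (Fin g) ℤ[X]) := by
    ext i j : 2
    rcases eq_or_ne i j with rfl | hij
    · simp [Matrix.one_apply]
    · simp [hij, Matrix.one_apply_ne hij]
  have hXne : (X - 1 : ℤ[X]) ≠ 0 := by
    simpa using Polynomial.X_sub_C_ne_zero (1 : ℤ)
  rw [hS, aux_det_fromBlocks_smul_one _ _ _ _ hXne]
  have hmapY2 : (Y ^ 2).map C = Matrix.single i0 i0 (C (a^2+b^2)) +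
      Matrix.single i1 i1 (C (a^2+b^2)) := by
    rw [hY2]
    ext i j : 2
    simp [Matrix.map_apply, aux_map_stdBasisMatrix, Matrix.single, apply_ite C]
  have hmulneg : (-(Y.map C)) * (-(Y.map C)) = (Y ^ 2).map C := by
    rw [neg_mul_neg, ← Matrix.map_mul, ← pow_two]
  rw [hmulneg]
  have hC2 : (C (a ^ 2 + b ^ 2 + 2) : ℤ[X]) = C (a^2+b^2) + 2 := by
    rw [C_add]; norm_num
  have hchar : charmatrix (1 + Y ^ 2) =
      (X : ℤ[X]) • (1 : Matrix (Fin g) (Fin g) ℤ[X]) - 1 - (Y ^ 2).map C := by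
    ext i j : 2
    rcases eq_or_ne i j with rfl | hij
    · simp only [charmatrix_apply_eq, Matrix.sub_apply, Matrix.smul_apply, Matrix.one_apply_eq,
        Matrix.add_apply, Matrix.map_apply, smul_eq_mul, mul_one, map_add, C_1]
      ring
    · simp only [charmatrix_apply_ne _ _ _ hij, Matrix.sub_apply, Matrix.smul_apply,
        Matrix.one_apply_ne hij, Matrix.add_apply, Matrix.map_apply, smul_eq_mul, mul_zero,
        map_add, C_1]
      simp [Matrix.one_apply_ne hij]
  have hdiag : (X - 1 : ℤ[X]) • charmatrix (1 + Y ^ 2) - (Y ^ 2).map C =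
      Matrix.diagonal (fun i => if i = i0 ∨ i = i1
        then X ^ 2 - C (a ^ 2 + b ^ 2 + 2) * X + 1 else (X - 1) ^ 2) := by
    rw [hchar]
    have halg : (X - 1 : ℤ[X]) • ((X : ℤ[X]) • (1 : Matrix (Fin g) (Fin g) ℤ[X]) - 1
        - (Y ^ 2).map C) - (Y ^ 2).map C =
        ((X - 1 : ℤ[X]) ^ 2) • (1 : Matrix (Fin g) (Fin g) ℤ[X])
          - (X : ℤ[X]) • ((Y ^ 2).map C) := by
      match_scalars <;> ring
    rw [halg, hmapY2, smul_add, Matrix.smul_single, Matrix.smul_single]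
    ext i j : 2
    rcases eq_or_ne i j with rfl | hij
    · simp only [Matrix.sub_apply, Matrix.smul_apply, Matrix.one_apply_eq, Matrix.add_apply,
        Matrix.single, Matrix.of_apply, Matrix.diagonal_apply_eq, smul_eq_mul, mul_one]
      rcases eq_or_ne i i0 with rfl | h0'
      · rw [if_pos ⟨rfl, rfl⟩, if_neg (fun h => (hne01.symm) h.1), if_pos (Or.inl rfl), hC2]
        ring
      · rcases eq_or_ne i i1 with rfl | h1'
        · rw [if_neg (fun h => h0' h.1.symm), if_pos ⟨rfl, rfl⟩, if_pos (Or.inr rfl), hC2]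
          ring
        · rw [if_neg (fun h => h0' h.1.symm), if_neg (fun h => h1' h.1.symm),
            if_neg (fun h => h.elim h0' h1')]
          ring
    · simp only [Matrix.sub_apply, Matrix.smul_apply, Matrix.one_apply_ne hij, Matrix.add_apply,
        Matrix.single, Matrix.of_apply, Matrix.diagonal_apply_ne _ hij, smul_eq_mul,
        mul_zero]
      rw [if_neg (fun h => hij (h.1.symm.trans h.2)), if_neg (fun h => hij (h.1.symm.trans h.2))]
      simp
  rw [hdiag, Matrix.det_diagonal]
  have hmem : ∀ i : Fin g, (i = i0 ∨ i = i1) ↔ i ∈ ({i0, i1} : Finset (Fin g)) := by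
    intro i; simp
  have hcard : ({i0, i1} : Finset (Fin g)).card = 2 := by
    rw [Finset.card_insert_of_notMem (by simpa using hne01), Finset.card_singleton]
  rw [← Finset.prod_mul_prod_compl ({i0, i1} : Finset (Fin g))]
  have h1' : ∏ i ∈ ({i0, i1} : Finset (Fin g)),
      (if i = i0 ∨ i = i1 then X ^ 2 - C (a ^ 2 + b ^ 2 + 2) * X + 1 else (X - 1 : ℤ[X]) ^ 2) =
      (X ^ 2 - C (a ^ 2 + b ^ 2 + 2) * X + 1) ^ 2 := by
    rw [Finset.prod_congr rfl (fun i hi => if_pos ((hmem i).2 hi)), Finset.prod_const, hcard]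
  have h2' : ∏ i ∈ ({i0, i1} : Finset (Fin g))ᶜ,
      (if i = i0 ∨ i = i1 then X ^ 2 - C (a ^ 2 + b ^ 2 + 2) * X + 1 else (X - 1 : ℤ[X]) ^ 2) =
      ((X - 1 : ℤ[X]) ^ 2) ^ (g - 2) := by
    rw [Finset.prod_congr rfl
        (fun i hi => if_neg (fun h => (Finset.mem_compl.1 hi) ((hmem i).1 h))),
      Finset.prod_const, Finset.card_compl, hcard, Fintype.card_fin]
  rw [h1', h2', ← pow_mul]
  have h24 : 2 * (g - 2) = 2 * g - 4 := by omega
  rw [h24, mul_comm]
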